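/- Let n ≥ 3, 2 ≤ i_1 ≤ n−2, i_1 + 1 ≤ t_2 ≤ n−1, and n − t_2 + 1 ≤ i_2 ≤ n − t_2 + i_1 − 1. Let P = {α ∈ ℕ^n : |α| = n, α_1 + ... + α_{i_1} ≤ i_1 + 1, Σ_{k=1}^{i_2+t_2−n} α_k + Σ_{k=t_2+1}^{n} α_k ≤ i_2 + 1}. Then there exist no subsets C_1,...,C_n ⊆ [n] with P = {Σ_{k=1}^n e_{j_k} : j_k ∈ C_k}. -/

import Mathlib

open Finset

private lemma val_mk' {n a : ℕ} (h : a < n) : (⟨a, h⟩ : Fin n).val = a := rfl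

private lemma sumPiSingle_filter {n : ℕ} (j : Fin n → Fin n) (p : Fin n → Prop)
    [DecidablePred p] :
    ∑ m ∈ Finset.univ.filter p, (∑ k, Pi.single (j k) (1:ℕ)) m
      = (Finset.univ.filter (fun k => p (j k))).card := by
  simp only [Finset.sum_apply, Pi.single_apply]
  rw [Finset.sum_comm, Finset.card_filter]
  refine Finset.sum_congr rfl (fun k _ => ?_)
  rw [Finset.sum_ite_eq' (Finset.univ.filter p) (j k) (fun _ => (1:ℕ))]
  simp

private lemma sumPiSingle_apply {n : ℕ} (j : Fin n → Fin n) (m : Fin n) :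
    (∑ k, (Pi.single (j k) (1:ℕ) : Fin n → ℕ)) m
      = (Finset.univ.filter (fun k => j k = m)).card := by
  simp only [Finset.sum_apply, Pi.single_apply]
  rw [Finset.card_filter]
  exact Finset.sum_congr rfl (fun k _ => by simp [eq_comm])

private def vec3 {n : ℕ} (u v w : Fin n) (a b c : ℕ) : Fin n → ℕ :=
  fun k => a * (if k = u then 1 else 0) + b * (if k = v then 1 else 0)
    + c * (if k = w then 1 else 0)

private lemma vec3_sum {n : ℕ} (u v w : Fin n) (a b c : ℕ) (F : Finset (Fin n)) :
    ∑ k ∈ F, vec3 u v w a b c k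
      = a * (if u ∈ F then 1 else 0) + b * (if v ∈ F then 1 else 0)
        + c * (if w ∈ F then 1 else 0) := by
  simp only [vec3, Finset.sum_add_distrib, ← Finset.mul_sum]
  rw [Finset.sum_ite_eq' F u (fun _ => (1:ℕ)), Finset.sum_ite_eq' F v (fun _ => (1:ℕ)),
    Finset.sum_ite_eq' F w (fun _ => (1:ℕ))]

theorem stmt13 (n i1 i2 t2 : ℕ) (hn : 3 ≤ n) (hi1a : 2 ≤ i1) (hi1b : i1 ≤ n - 2)
    (ht2a : i1 + 1 ≤ t2) (ht2b : t2 ≤ n - 1)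
    (hi2a : n - t2 + 1 ≤ i2) (hi2b : i2 ≤ n - t2 + i1 - 1) :
    ¬ ∃ C : Fin n → Set (Fin n),
      {α : Fin n → ℕ | ∑ k, α k = n ∧
        ∑ k ∈ Finset.univ.filter (fun m : Fin n => m.val < i1), α k ≤ i1 + 1 ∧
        ∑ k ∈ Finset.univ.filter (fun m : Fin n => m.val < i2 + t2 - n ∨ t2 ≤ m.val), α k ≤ i2 + 1} =
      {α : Fin n → ℕ | ∃ j : Fin n → Fin n, (∀ k, j k ∈ C k) ∧ α = ∑ k, Pi.single (j k) 1} := by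
  classical
  rintro ⟨C, hC⟩
  have h0n : 0 < n := by omega
  have hun : i1 - 1 < n := by omega
  have hvn : t2 < n := by omega
  have hwn : i1 < n := by omega
  set z : Fin n := ⟨0, h0n⟩ with hz
  set u : Fin n := ⟨i1 - 1, hun⟩ with hu
  set v : Fin n := ⟨t2, hvn⟩ with hv
  set w : Fin n := ⟨i1, hwn⟩ with hw
  have hzw : z ≠ w := by simp [hz, hw, Fin.ext_iff]; omega
  have huv : u ≠ v := by simp [hu, hv, Fin.ext_iff]; omega
  have huw : u ≠ w := by simp [hu, hw, Fin.ext_iff]; omega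
  have hvw : v ≠ w := by simp [hv, hw, Fin.ext_iff]; omega
  set m : ℕ := min i1 i2 + 1 with hm
  set q : ℕ := min n (i1 + i2 + 2) with hq
  -- key: any valid choice function gives the two cardinality constraints
  have key : ∀ j : Fin n → Fin n, (∀ k, j k ∈ C k) →
      (Finset.univ.filter (fun k : Fin n => (j k).val < i1)).card ≤ i1 + 1 ∧
      (Finset.univ.filter (fun k : Fin n =>
        (j k).val < i2 + t2 - n ∨ t2 ≤ (j k).val)).card ≤ i2 + 1 := by
    intro j hj
    have hmem : (∑ k, Pi.single (j k) (1:ℕ)) ∈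
        {α : Fin n → ℕ | ∑ k, α k = n ∧
          ∑ k ∈ Finset.univ.filter (fun m : Fin n => m.val < i1), α k ≤ i1 + 1 ∧
          ∑ k ∈ Finset.univ.filter (fun m : Fin n => m.val < i2 + t2 - n ∨ t2 ≤ m.val), α k ≤ i2 + 1} := by
      rw [hC]; exact ⟨j, hj, rfl⟩
    obtain ⟨-, h1, h2⟩ := hmem
    rw [sumPiSingle_filter] at h1 h2
    exact ⟨h1, h2⟩
  -- the sets N1, N2
  set N1 : Finset (Fin n) :=
    Finset.univ.filter (fun k => ∃ c, c ∈ C k ∧ c.val < i1) with hN1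
  set N2 : Finset (Fin n) :=
    Finset.univ.filter (fun k => ∃ c, c ∈ C k ∧ (c.val < i2 + t2 - n ∨ t2 ≤ c.val)) with hN2
  -- μ ∈ P, get a witness (also gives default choices)
  have hμmem : (vec3 z w w m (n - m) 0) ∈
      {α : Fin n → ℕ | ∃ j : Fin n → Fin n, (∀ k, j k ∈ C k) ∧ α = ∑ k, Pi.single (j k) 1} := by
    rw [← hC]
    refine ⟨?_, ?_, ?_⟩
    · rw [vec3_sum]
      simp only [Finset.mem_univ, if_true]
      omega
    · rw [vec3_sum]
      simp only [Finset.mem_filter, Finset.mem_univ, true_and, hz, hw, val_mk']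
      split_ifs <;> omega
    · rw [vec3_sum]
      simp only [Finset.mem_filter, Finset.mem_univ, true_and, hz, hw, val_mk']
      split_ifs <;> omega
  obtain ⟨jμ, hjμ, hμeq⟩ := hμmem
  -- |N1 ∩ N2| ≥ m
  have hFz : (Finset.univ.filter (fun k => jμ k = z)).card = m := by
    rw [← sumPiSingle_apply jμ z, ← congrFun hμeq z]
    simp [vec3, hzw]
  have hcap : m ≤ (N1 ∩ N2).card := by
    rw [← hFz]
    refine Finset.card_le_card ?_
    intro k hk
    simp only [Finset.mem_filter, Finset.mem_univ, true_and] at hk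
    have hzk : z ∈ C k := hk ▸ hjμ k
    simp only [Finset.mem_inter, hN1, hN2, Finset.mem_filter, Finset.mem_univ, true_and]
    exact ⟨⟨z, hzk, by simp [hz, val_mk']; omega⟩, ⟨z, hzk, by simp [hz, val_mk']; omega⟩⟩
  -- ξ ∈ P
  have hξmem : (vec3 u v w (i1 + 1) (q - (i1 + 1)) (n - q)) ∈
      {α : Fin n → ℕ | ∃ j : Fin n → Fin n, (∀ k, j k ∈ C k) ∧ α = ∑ k, Pi.single (j k) 1} := by
    rw [← hC]
    refine ⟨?_, ?_, ?_⟩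
    · rw [vec3_sum]
      simp only [Finset.mem_univ, if_true]
      omega
    · rw [vec3_sum]
      simp only [Finset.mem_filter, Finset.mem_univ, true_and, hu, hv, hw, val_mk']
      split_ifs <;> omega
    · rw [vec3_sum]
      simp only [Finset.mem_filter, Finset.mem_univ, true_and, hu, hv, hw, val_mk']
      split_ifs <;> omega
  obtain ⟨jξ, hjξ, hξeq⟩ := hξmem
  have hFu : (Finset.univ.filter (fun k => jξ k = u)).card = i1 + 1 := by
    rw [← sumPiSingle_apply jξ u, ← congrFun hξeq u]
    simp [vec3, huv, huw]
  have hFv : (Finset.univ.filter (fun k => jξ k = v)).card = q - (i1 + 1) := by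
    rw [← sumPiSingle_apply jξ v, ← congrFun hξeq v]
    simp [vec3, huv.symm, hvw]
  -- |N1 ∪ N2| ≥ q
  have hcup : q ≤ (N1 ∪ N2).card := by
    have hdisj : Disjoint (Finset.univ.filter (fun k => jξ k = u))
        (Finset.univ.filter (fun k => jξ k = v)) := by
      rw [Finset.disjoint_left]
      intro k hk1 hk2
      simp only [Finset.mem_filter, Finset.mem_univ, true_and] at hk1 hk2
      exact huv (hk1 ▸ hk2 ▸ rfl)
    have hsub : (Finset.univ.filter (fun k => jξ k = u)) ∪
        (Finset.univ.filter (fun k => jξ k = v)) ⊆ N1 ∪ N2 := by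
      intro k hk
      rcases Finset.mem_union.mp hk with hk | hk <;>
        simp only [Finset.mem_filter, Finset.mem_univ, true_and] at hk
      · refine Finset.mem_union_left _ ?_
        simp only [hN1, Finset.mem_filter, Finset.mem_univ, true_and]
        exact ⟨u, hk ▸ hjξ k, by simp [hu, val_mk']; omega⟩
      · refine Finset.mem_union_right _ ?_
        simp only [hN2, Finset.mem_filter, Finset.mem_univ, true_and]
        exact ⟨v, hk ▸ hjξ k, by simp [hv, val_mk']⟩
    have := Finset.card_le_card hsub
    rw [Finset.card_union_of_disjoint hdisj, hFu, hFv] at this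
    omega
  -- |N1| ≤ i1 + 1
  have hN1card : N1.card ≤ i1 + 1 := by
    set j1 : Fin n → Fin n := fun k =>
      if h : ∃ c, c ∈ C k ∧ c.val < i1 then h.choose else jμ k with hj1
    have hj1C : ∀ k, j1 k ∈ C k := by
      intro k
      rw [hj1]
      by_cases h : ∃ c, c ∈ C k ∧ c.val < i1
      · simp only [dif_pos h]; exact h.choose_spec.1
      · simp only [dif_neg h]; exact hjμ k
    have := (key j1 hj1C).1
    refine le_trans (Finset.card_le_card ?_) this
    intro k hk
    simp only [hN1, Finset.mem_filter, Finset.mem_univ, true_and] at hk ⊢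
    rw [hj1]
    simp only [dif_pos hk]
    exact hk.choose_spec.2
  -- |N2| ≤ i2 + 1
  have hN2card : N2.card ≤ i2 + 1 := by
    set j2 : Fin n → Fin n := fun k =>
      if h : ∃ c, c ∈ C k ∧ (c.val < i2 + t2 - n ∨ t2 ≤ c.val) then h.choose else jμ k with hj2
    have hj2C : ∀ k, j2 k ∈ C k := by
      intro k
      rw [hj2]
      by_cases h : ∃ c, c ∈ C k ∧ (c.val < i2 + t2 - n ∨ t2 ≤ c.val)
      · simp only [dif_pos h]; exact h.choose_spec.1
      · simp only [dif_neg h]; exact hjμ k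
    have := (key j2 hj2C).2
    refine le_trans (Finset.card_le_card ?_) this
    intro k hk
    simp only [hN2, Finset.mem_filter, Finset.mem_univ, true_and] at hk ⊢
    rw [hj2]
    simp only [dif_pos hk]
    exact hk.choose_spec.2
  have hsum := Finset.card_union_add_card_inter N1 N2
  omega
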